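/- The tournament T(5) on vertices {x_1,x_2,x_3,x_4,y} with arc set {x_1x_2, x_2x_3, x_3x_4, x_4x_1, x_1y, x_3y, yx_2, yx_4, x_1x_3, x_2x_4} is strongly connected, satisfies condition A_0 (with n = 5), but contains no Hamiltonian bypass. -/

import Mathlib

open Finset

/-- A list of distinct vertices whose consecutive members are joined by arcs. -/
def IsPathList {V : Type*} (A : V → V → Prop) (p : List V) : Prop :=
  p.Nodup ∧ p.Chain' A

/-- A directed cycle: at least two distinct vertices, consecutive arcs, and an arc
from the last vertex back to the first. -/
def IsCycleList {V : Type*} (A : V → V → Prop) (c : List V) : Prop :=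
  2 ≤ c.length ∧ c.Nodup ∧ c.Chain' A ∧ ∀ h : c ≠ [], A (c.getLast h) (c.head h)

/-- A Hamiltonian bypass: a Hamiltonian path `v₁ v₂ … vₙ` together with the arc `v₁ vₙ`. -/
def HasHamBypass {V : Type*} (A : V → V → Prop) : Prop :=
  ∃ l : List V, l.Nodup ∧ (∀ v, v ∈ l) ∧ l.Chain' A ∧
    ∀ h : l ≠ [], A (l.head h) (l.getLast h)

/-- A Hamiltonian cycle. -/
def HasHamCycle {V : Type*} (A : V → V → Prop) : Prop :=
  ∃ c : List V, IsCycleList A c ∧ ∀ v, v ∈ c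

/-- out-degree of `x` towards a set `S`. -/
def outDegOn {V : Type*} [DecidableEq V] (A : V → V → Prop) [DecidableRel A]
    (x : V) (S : Finset V) : ℕ := (S.filter fun y => A x y).card

/-- in-degree of `x` from a set `S`. -/
def inDegOn {V : Type*} [DecidableEq V] (A : V → V → Prop) [DecidableRel A]
    (x : V) (S : Finset V) : ℕ := (S.filter fun y => A y x).card

/-- degree of `x` with respect to a set `S` (arcs in both directions). -/
def degOn {V : Type*} [DecidableEq V] (A : V → V → Prop) [DecidableRel A]
    (x : V) (S : Finset V) : ℕ := outDegOn A x S + inDegOn A x S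

/-- out-degree of `x`. -/
def outDeg {V : Type*} [Fintype V] [DecidableEq V] (A : V → V → Prop) [DecidableRel A]
    (x : V) : ℕ := outDegOn A x Finset.univ

/-- in-degree of `x`. -/
def inDeg {V : Type*} [Fintype V] [DecidableEq V] (A : V → V → Prop) [DecidableRel A]
    (x : V) : ℕ := inDegOn A x Finset.univ

/-- degree of `x`. -/
def deg {V : Type*} [Fintype V] [DecidableEq V] (A : V → V → Prop) [DecidableRel A]
    (x : V) : ℕ := outDeg A x + inDeg A x

/-- The condition `A_k` of Manoussakis: for every triple of distinct vertices `x, y, z`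
with `x` and `y` non-adjacent, if `xz` is not an arc then
`d(x)+d(y)+d⁺(x)+d⁻(z) ≥ 3n-2+k`, and if `zx` is not an arc then
`d(x)+d(y)+d⁻(x)+d⁺(z) ≥ 3n-2+k`. -/
def CondA {V : Type*} [Fintype V] [DecidableEq V] (A : V → V → Prop) [DecidableRel A]
    (k : ℤ) : Prop :=
  ∀ x y z : V, x ≠ y → z ≠ x → z ≠ y → ¬A x y → ¬A y x →
    (¬A x z → (deg A x + deg A y + outDeg A x + inDeg A z : ℤ) ≥
      3 * (Fintype.card V : ℤ) - 2 + k) ∧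
    (¬A z x → (deg A x + deg A y + inDeg A x + outDeg A z : ℤ) ≥
      3 * (Fintype.card V : ℤ) - 2 + k)


/-- The tournament `T(5)`: vertices `0,1,2,3` stand for `x₁,x₂,x₃,x₄` and `4` for `y`. -/
def T5Adj : Fin 5 → Fin 5 → Prop := fun u v =>
  (u.val, v.val) ∈ [(0, 1), (1, 2), (2, 3), (3, 0), (0, 4), (2, 4), (4, 1), (4, 3),
    (0, 2), (1, 3)]

instance : DecidableRel T5Adj := fun u v => by
  unfold T5Adj; infer_instance


def t5 : Fin 5 → Fin 5 → Bool := fun u v =>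
  [(0, 1), (1, 2), (2, 3), (3, 0), (0, 4), (2, 4), (4, 1), (4, 3),
    (0, 2), (1, 3)].any fun p => p.1 == u.val && p.2 == v.val

lemma t5_iff (u v : Fin 5) : T5Adj u v ↔ t5 u v = true := by
  fin_cases u <;> fin_cases v <;> simp [T5Adj, t5] <;> decide

def chainB {α : Type*} (f : α → α → Bool) : List α → Bool
  | [] => true
  | [_] => true
  | a :: b :: t => f a b && chainB f (b :: t)

lemma chainB_iff (l : List (Fin 5)) : l.Chain' T5Adj ↔ chainB t5 l = true := by
  match l with
  | [] => exact iff_of_true List.isChain_nil rfl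
  | [_] => exact iff_of_true (List.isChain_singleton _) rfl
  | a :: b :: t =>
    rw [show List.Chain' T5Adj (a :: b :: t) ↔ T5Adj a b ∧ List.Chain' T5Adj (b :: t) from
      List.isChain_cons_cons, chainB, Bool.and_eq_true, ← chainB_iff (b :: t), t5_iff]

set_option maxRecDepth 10000 in
lemma t5_key : ∀ m ∈ (List.finRange 5).permutations',
    (chainB t5 m && t5 m.headI m.getLastI) = false := by decide

lemma t5_tour : ∀ u v : Fin 5, u ≠ v → (T5Adj u v ↔ ¬T5Adj v u) := by
  have h : ∀ u v : Fin 5, u ≠ v → (t5 u v = true ↔ ¬ t5 v u = true) := by decide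
  intro u v huv
  rw [t5_iff, t5_iff]
  exact h u v huv

/-- `T(5)` is a strongly connected tournament satisfying `A₀` with no
Hamiltonian bypass. -/
theorem stmt11 :
    (∀ u v : Fin 5, u ≠ v → (T5Adj u v ↔ ¬T5Adj v u)) ∧
    (∀ u v : Fin 5, Relation.ReflTransGen T5Adj u v) ∧
    CondA T5Adj 0 ∧ ¬HasHamBypass T5Adj := by
  have arc : ∀ u v : Fin 5, t5 u v = true → T5Adj u v := fun u v h => (t5_iff u v).mpr h
  refine ⟨t5_tour, ?_, ?_, ?_⟩
  · -- strong connectivity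
    have r0 : ∀ v : Fin 5, Relation.ReflTransGen T5Adj 0 v := by
      have h04 : Relation.ReflTransGen T5Adj 0 4 := .single (arc 0 4 rfl)
      have h01 : Relation.ReflTransGen T5Adj 0 1 := h04.trans (.single (arc 4 1 rfl))
      have h02 : Relation.ReflTransGen T5Adj 0 2 := h01.trans (.single (arc 1 2 rfl))
      have h03 : Relation.ReflTransGen T5Adj 0 3 := h02.trans (.single (arc 2 3 rfl))
      intro v
      fin_cases v
      · exact .refl
      · exact h01
      · exact h02
      · exact h03
      · exact h04
    have rt0 : ∀ u : Fin 5, Relation.ReflTransGen T5Adj u 0 := by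
      have h30 : Relation.ReflTransGen T5Adj 3 0 := .single (arc 3 0 rfl)
      have h20 : Relation.ReflTransGen T5Adj 2 0 := (Relation.ReflTransGen.single (arc 2 3 rfl)).trans h30
      have h10 : Relation.ReflTransGen T5Adj 1 0 := (Relation.ReflTransGen.single (arc 1 2 rfl)).trans h20
      have h40 : Relation.ReflTransGen T5Adj 4 0 := (Relation.ReflTransGen.single (arc 4 1 rfl)).trans h10
      intro u
      fin_cases u
      · exact .refl
      · exact h10
      · exact h20
      · exact h30
      · exact h40
    exact fun u v => (rt0 u).trans (r0 v)
  · -- CondA is vacuous in a tournament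
    intro x y z hxy _ _ hA1 hA2
    exact absurd ((t5_tour x y hxy).mpr hA2) hA1
  · -- no Hamiltonian bypass
    rintro ⟨l, nd, mem, ch, hl⟩
    have hne : l ≠ [] := by
      intro h; exact absurd (mem 0) (by simp [h])
    have hsub : List.Subperm (List.finRange 5) l :=
      List.subperm_of_subset (List.nodup_finRange 5) (fun a _ => mem a)
    have hlen : l.length ≤ (List.finRange 5).length := by
      simpa using nd.length_le_card
    have hperm : List.Perm l (List.finRange 5) := (hsub.perm_of_length_le hlen).symm
    have hmem : l ∈ (List.finRange 5).permutations' := List.mem_permutations'.mpr hperm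
    have hkey := t5_key l hmem
    have hchain : chainB t5 l = true := (chainB_iff l).mp ch
    have hH : l.head hne = l.headI := by
      cases l with
      | nil => exact absurd rfl hne
      | cons a t => rfl
    have hG : l.getLast hne = l.getLastI := by
      rw [List.getLastI_eq_getLast?, List.getLast?_eq_getLast_of_ne_nil hne, Option.getD_some]
    have harc : t5 l.headI l.getLastI = true := by
      rw [← hH, ← hG, ← t5_iff]; exact hl hne
    rw [hchain, harc] at hkey
    exact absurd hkey (by simp)
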